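/- Let e be an m-linear preregular form on an n-dimensional vector space V. Then there exists an m-linear form ẽ on V such that for all indices i, j: Σ_{i_1,...,i_{m-1}} ẽ_{i i_1 ... i_{m-1}} e_{i_1 ... i_{m-1} j} = δ_{ij}, where e_{j_1...j_m} = e(v_{j_1},...,v_{j_m}) with respect to a fixed basis. That is, the n × n^{m-1} 'matrix' of e admits a left inverse arising from an m-linear form. -/

import Mathlib

open Matrix

/-- If `e` is an `m`-linear preregular form (here `m = p + 1 ≥ 2`) on an
`n`-dimensional vector space `V` with basis `b`, then there is an `m`-linear form `etilde`
on `V` with `∑_{i_1,…,i_{m-1}} etilde_{i i_1 ⋯ i_{m-1}} e_{i_1 ⋯ i_{m-1} j} = δ_{ij}`. -/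
theorem preregular_has_multilinear_left_inverse
    {k : Type*} [Field k] {V : Type*} [AddCommGroup V] [Module k V]
    {n : ℕ} (b : Module.Basis (Fin n) k V)
    (p : ℕ) (hp : 1 ≤ p)
    (e : MultilinearMap k (fun _ : Fin (p + 1) => V) k)
    -- preregularity (a): nondegeneracy in the first slot
    (hnd : ∀ v : V, (∀ w : Fin p → V, e (Fin.cons v w) = 0) → v = 0)
    -- preregularity (b): twisted cyclicity
    (hcyc : ∃ ψ : V ≃ₗ[k] V, ∀ g : Fin (p + 1) → V,
      e g = e (Fin.cons (ψ (g (Fin.last p))) (g ∘ Fin.castSucc))) :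
    ∃ etilde : MultilinearMap k (fun _ : Fin (p + 1) => V) k,
      ∀ i j : Fin n,
        (∑ t : Fin p → Fin n,
          etilde (Fin.cons (b i) (b ∘ t)) * e (Fin.snoc (b ∘ t) (b j)))
        = if i = j then (1 : k) else 0 := by
  classical
  obtain ⟨ψ, hψ⟩ := hcyc
  -- the "matrix" of e with first index separated
  set A : Matrix (Fin n) (Fin p → Fin n) k :=
    fun l t => e (Fin.cons (b l) (b ∘ t)) with hA
  -- linearity in the first slot
  have hlin : ∀ (c : Fin n → k) (w : Fin p → V),
      e (Fin.cons (∑ l, c l • b l) w) = ∑ l, c l * e (Fin.cons (b l) w) := by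
    intro c w
    rw [← MultilinearMap.curryLeft_apply, map_sum]
    simp [MultilinearMap.curryLeft_apply, smul_eq_mul]
  -- injectivity of c ↦ Aᵀ c
  have hinj : LinearMap.ker (Matrix.toLin' Aᵀ) = ⊥ := by
    rw [LinearMap.ker_eq_bot']
    intro c hc
    have hc' : ∀ t : Fin p → Fin n, ∑ l, A l t * c l = 0 := by
      intro t
      have := congrFun hc t
      simpa [Matrix.toLin'_apply, Matrix.mulVec, dotProduct,
        Matrix.transpose_apply] using this
    set v : V := ∑ l, c l • b l with hv
    have hvt : ∀ w : Fin p → V, e (Fin.cons v w) = 0 := by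
      have hF : e.curryLeft v = 0 := by
        refine Module.Basis.ext_multilinear (fun _ => b) fun t => ?_
        have : e.curryLeft v (b ∘ t) = 0 := by
          rw [MultilinearMap.curryLeft_apply, hv, hlin]
          rw [← hc' t]
          exact Finset.sum_congr rfl fun l _ => mul_comm _ _
        exact this
      intro w
      rw [← MultilinearMap.curryLeft_apply, hF]
      rfl
    have hv0 : v = 0 := hnd v hvt
    have := Fintype.linearIndependent_iff.mp b.linearIndependent c (by rw [← hv]; exact hv0)
    funext l; exact this l
  obtain ⟨g, hg⟩ := (Matrix.toLin' Aᵀ).exists_leftInverse_of_injective hinj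
  set B : Matrix (Fin n) (Fin p → Fin n) k := LinearMap.toMatrix' g with hB
  have hBA : B * Aᵀ = 1 := by
    have h1 : LinearMap.toMatrix' (g ∘ₗ Matrix.toLin' Aᵀ) = B * Aᵀ := by
      rw [LinearMap.toMatrix'_comp, LinearMap.toMatrix'_toLin']
    rw [← h1, hg, LinearMap.toMatrix'_id]
  -- matrices of ψ and ψ⁻¹
  set P : Matrix (Fin n) (Fin n) k := LinearMap.toMatrix b b ψ.toLinearMap with hP
  set P' : Matrix (Fin n) (Fin n) k := LinearMap.toMatrix b b ψ.symm.toLinearMap with hP'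
  have hP'P : P' * P = 1 := by
    rw [hP, hP', ← LinearMap.toMatrix_comp b b b]
    have : ψ.symm.toLinearMap ∘ₗ ψ.toLinearMap = LinearMap.id := by
      ext v; simp
    rw [this, LinearMap.toMatrix_id]
  set E : Matrix (Fin n) (Fin p → Fin n) k := P' * B with hE
  -- construct etilde from the coefficients E
  refine ⟨∑ s : Fin (p + 1) → Fin n, E (s 0) (Fin.tail s) •
      ((MultilinearMap.mkPiAlgebra k (Fin (p + 1)) k).compLinearMap
        (fun j => b.coord (s j))), ?_⟩
  set etilde : MultilinearMap k (fun _ : Fin (p + 1) => V) k :=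
    ∑ s : Fin (p + 1) → Fin n, E (s 0) (Fin.tail s) •
      ((MultilinearMap.mkPiAlgebra k (Fin (p + 1)) k).compLinearMap
        (fun j => b.coord (s j))) with het
  have hcoord : ∀ l j : Fin n, b.coord l (b j) = if j = l then (1 : k) else 0 := by
    intro l j
    rw [Module.Basis.coord_apply, Module.Basis.repr_self, Finsupp.single_apply]
  have hconsb : ∀ (i : Fin n) (t : Fin p → Fin n),
      (Fin.cons (b i) (b ∘ t) : Fin (p + 1) → V) = b ∘ Fin.cons i t := by
    intro i t
    funext x
    refine Fin.cases ?_ (fun x => ?_) x <;> simp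
  have hetilde : ∀ (i : Fin n) (t : Fin p → Fin n),
      etilde (Fin.cons (b i) (b ∘ t)) = E i t := by
    intro i t
    have h1 : etilde (Fin.cons (b i) (b ∘ t)) =
        ∑ s : Fin (p + 1) → Fin n, E (s 0) (Fin.tail s) *
          ∏ j, b.coord (s j) ((Fin.cons (b i) (b ∘ t) : Fin (p + 1) → V) j) := by
      rw [het, MultilinearMap.sum_apply]
      exact Finset.sum_congr rfl fun s _ => by
        simp [smul_eq_mul]
    rw [h1, Finset.sum_eq_single (Fin.cons i t)]
    · rw [hconsb]
      have : ∀ j : Fin (p + 1),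
          b.coord ((Fin.cons i t : Fin (p + 1) → Fin n) j) ((b ∘ (Fin.cons i t : Fin (p + 1) → Fin n)) j) = 1 := by
        intro j; rw [Function.comp_apply, hcoord]; simp
      rw [Finset.prod_congr rfl fun j _ => this j]
      simp
    · intro s _ hs
      have : ∃ j, s j ≠ (Fin.cons i t : Fin (p + 1) → Fin n) j := by
        by_contra h
        push_neg at h
        exact hs (funext h)
      obtain ⟨j, hj⟩ := this
      have hz : b.coord (s j) ((Fin.cons (b i) (b ∘ t) : Fin (p + 1) → V) j) = 0 := by
        rw [hconsb, Function.comp_apply, hcoord, if_neg]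
        exact fun h => hj h.symm
      rw [Finset.prod_eq_zero (Finset.mem_univ j) hz, mul_zero]
    · intro h
      exact absurd (Finset.mem_univ _) h
  -- cyclicity computation
  have hsnoc : ∀ (j : Fin n) (t : Fin p → Fin n),
      e (Fin.snoc (b ∘ t) (b j)) = ∑ l, P l j * A l t := by
    intro j t
    rw [hψ]
    have h1 : (Fin.snoc (b ∘ t) (b j) : Fin (p + 1) → V) (Fin.last p) = b j :=
      Fin.snoc_last _ _
    have h2 : (Fin.snoc (b ∘ t) (b j) : Fin (p + 1) → V) ∘ Fin.castSucc = b ∘ t :=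
      funext fun x => Fin.snoc_castSucc _ _ _
    rw [h1, h2]
    have hrep : ψ (b j) = ∑ l, P l j • b l := by
      conv_lhs => rw [← b.sum_repr (ψ (b j))]
      refine Finset.sum_congr rfl fun l _ => ?_
      rw [hP, LinearMap.toMatrix_apply]
      rfl
    rw [hrep, hlin]
  intro i j
  calc (∑ t : Fin p → Fin n,
        etilde (Fin.cons (b i) (b ∘ t)) * e (Fin.snoc (b ∘ t) (b j)))
      = ∑ t : Fin p → Fin n, ∑ l, P l j * (E i t * A l t) := by
        refine Finset.sum_congr rfl fun t _ => ?_
        rw [hetilde, hsnoc, Finset.mul_sum]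
        exact Finset.sum_congr rfl fun l _ => by ring
    _ = ∑ l, P l j * ((E * Aᵀ) i l) := by
        rw [Finset.sum_comm]
        refine Finset.sum_congr rfl fun l _ => ?_
        rw [Matrix.mul_apply, Finset.mul_sum]
        exact Finset.sum_congr rfl fun t _ => by rw [Matrix.transpose_apply]
    _ = ∑ l, P l j * P' i l := by
        have hEA : E * Aᵀ = P' := by
          rw [hE, Matrix.mul_assoc, hBA, Matrix.mul_one]
        rw [hEA]
    _ = (P' * P) i j := by
        rw [Matrix.mul_apply]
        exact Finset.sum_congr rfl fun l _ => mul_comm _ _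
    _ = if i = j then (1 : k) else 0 := by rw [hP'P, Matrix.one_apply]
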